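/- Closure of Martin-Löf randomness under marginalization: Let Ω and Θ be alphabets and P a finite probability space on Ω × Θ. Let α ∈ (Ω × Θ)^∞ and let β ∈ Ω^∞ be obtained from α by replacing each element (m,l) by m. If α is Martin-Löf P-random, then β is Martin-Löf Q-random, where Q is the finite probability space on Ω defined by Q(m) = Σ_{l∈Θ} P(m,l). -/

import Mathlib

open MeasureTheory Filter

/-- The cylinder set of all infinite sequences extending the finite string `σ`. -/
def cylinder {Ω : Type*} (σ : List Ω) : Set (ℕ → Ω) :=
  {α | ∀ i : Fin σ.length, α i = σ.get i}

/-- The open set `[S]` generated by a set `S` of finite strings. -/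
def openCyl {Ω : Type*} (S : Set (List Ω)) : Set (ℕ → Ω) :=
  ⋃ σ ∈ S, cylinder σ

/-- A set of strings is prefix-free if no member is a proper prefix of another. -/
def PrefixFreeSet {Ω : Type*} (S : Set (List Ω)) : Prop :=
  ∀ σ ∈ S, ∀ τ ∈ S, σ <+: τ → σ = τ

/-- A set is recursively enumerable: the domain of a partial recursive function. -/
def IsRE {α : Type*} [Primcodable α] (p : Set α) : Prop :=
  ∃ f : α →. Unit, Partrec f ∧ ∀ a, a ∈ p ↔ (f a).Dom

/-- A Martin-Löf test with respect to the measure `μ`: a recursively enumerable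
`C ⊆ ℕ⁺ × Ω*` whose sections `Cₙ` (for `n ≥ 1`) are prefix-free with
`μ [Cₙ] < 2⁻ⁿ`. -/
def MLTest {Ω : Type*} [Primcodable Ω] [MeasurableSpace Ω]
    (μ : Measure (ℕ → Ω)) (C : Set (ℕ × List Ω)) : Prop :=
  IsRE C ∧ ∀ n : ℕ, 1 ≤ n →
    PrefixFreeSet {σ | (n, σ) ∈ C} ∧
    μ (openCyl {σ | (n, σ) ∈ C}) < (2 : ENNReal)⁻¹ ^ n

/-- `α` is Martin-Löf random with respect to `μ` if it avoids `⋂_{n≥1} [Cₙ]`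
for every Martin-Löf test `C` with respect to `μ`. -/
def MLRandom {Ω : Type*} [Primcodable Ω] [MeasurableSpace Ω]
    (μ : Measure (ℕ → Ω)) (α : ℕ → Ω) : Prop :=
  ∀ C : Set (ℕ × List Ω), MLTest μ C →
    α ∉ ⋂ n ∈ {n : ℕ | 1 ≤ n}, openCyl {σ | (n, σ) ∈ C}

/-- Closure of Martin-Löf randomness under marginalization: let `P` be a finite
probability space on `Ω × Θ`, let `μ` be the Bernoulli measure `λ_P` and `ν` the
Bernoulli measure `λ_Q` of the marginal `Q(m) = Σ_{l∈Θ} P(m,l)`. If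
`α ∈ (Ω × Θ)^∞` is Martin-Löf `P`-random, then its first-component projection
`β` is Martin-Löf `Q`-random. -/
lemma list_prod_map_get {X : Type*} (f : X → ℝ) (σ : List X) :
    (σ.map f).prod = ∏ i : Fin σ.length, f (σ.get i) := by
  conv_lhs => rw [← List.ofFn_get σ]
  rw [List.map_ofFn, List.prod_ofFn]
  rfl

lemma prod_dite_prefix {X : Type*} (f : X → ℝ) (σ : List X) (k : ℕ) (hk : σ.length ≤ k) :
    (∏ i : Fin k, if h : (i : ℕ) < σ.length then f (σ.get ⟨i, h⟩) else 1)
      = (σ.map f).prod := by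
  have h1 : (∏ i : Fin k, if h : (i : ℕ) < σ.length then f (σ.get ⟨i, h⟩) else 1)
      = ∏ n ∈ Finset.range k, (if h : n < σ.length then f (σ.get ⟨n, h⟩) else 1) :=
    Fin.prod_univ_eq_prod_range (fun n => if h : n < σ.length then f (σ.get ⟨n, h⟩) else 1) k
  have h2 : (∏ n ∈ Finset.range k, (if h : n < σ.length then f (σ.get ⟨n, h⟩) else 1))
      = ∏ n ∈ Finset.range σ.length, (if h : n < σ.length then f (σ.get ⟨n, h⟩) else 1) := by
    refine (Finset.prod_subset (Finset.range_subset_range.mpr hk) ?_).symm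
    intro x _ hx
    rw [Finset.mem_range] at hx
    exact dif_neg hx
  have h3 : (∏ n ∈ Finset.range σ.length, (if h : n < σ.length then f (σ.get ⟨n, h⟩) else 1))
      = ∏ i : Fin σ.length, f (σ.get i) := by
    rw [← Fin.prod_univ_eq_prod_range (fun n => if h : n < σ.length then f (σ.get ⟨n, h⟩) else 1) σ.length]
    refine Finset.prod_congr rfl fun i _ => ?_
    rw [dif_pos i.isLt]
  rw [h1, h2, h3, list_prod_map_get]

lemma prefix_ofFn_iff {X : Type*} (σ : List X) (k : ℕ) (hk : σ.length ≤ k) (τ : Fin k → X) :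
    σ <+: List.ofFn τ ↔ ∀ (i : ℕ) (h : i < σ.length), τ ⟨i, lt_of_lt_of_le h hk⟩ = σ.get ⟨i, h⟩ := by
  constructor
  · intro hpre i h
    have h2 := hpre.getElem (i := i) h
    rw [List.getElem_ofFn] at h2
    simpa [List.get_eq_getElem] using h2.symm
  · intro hval
    rw [List.prefix_iff_eq_take]
    apply List.ext_getElem
    · simp [Nat.min_eq_left, hk, List.length_take]
    · intro i h1 h2
      rw [List.getElem_take, List.getElem_ofFn]
      exact (hval i h1).symm

lemma sum_all_tuples {X : Type*} [Fintype X] (R : X → ℝ) (hR1 : ∑ x, R x = 1) (k : ℕ) :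
    ∑ τ : Fin k → X, ∏ i, R (τ i) = 1 := by
  classical
  rw [← Fintype.piFinset_univ, ← Finset.prod_univ_sum]
  simp [hR1]

lemma fiber_sum {X : Type*} [Fintype X] (R : X → ℝ) (hR1 : ∑ x, R x = 1)
    (σ : List X) (k : ℕ) (hk : σ.length ≤ k)
    [DecidablePred fun τ : Fin k → X => σ <+: List.ofFn τ] :
    ∑ τ ∈ Finset.univ.filter (fun τ : Fin k → X => σ <+: List.ofFn τ), ∏ i, R (τ i)
      = (σ.map R).prod := by
  classical
  have hfilter : Finset.univ.filter (fun τ : Fin k → X => σ <+: List.ofFn τ)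
      = Fintype.piFinset (fun i : Fin k =>
          if h : (i : ℕ) < σ.length then ({σ.get ⟨i, h⟩} : Finset X) else Finset.univ) := by
    ext τ
    simp only [Finset.mem_filter, Finset.mem_univ, true_and, Fintype.mem_piFinset,
      prefix_ofFn_iff σ k hk τ]
    constructor
    · intro hv i
      by_cases h : (i : ℕ) < σ.length
      · rw [dif_pos h, Finset.mem_singleton]
        simpa using hv i h
      · rw [dif_neg h]; exact Finset.mem_univ _
    · intro hv i h
      have h2 := hv ⟨i, lt_of_lt_of_le h hk⟩
      rw [dif_pos h] at h2
      simpa using h2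
  rw [hfilter, ← Finset.prod_univ_sum]
  have hsum : ∀ i : Fin k,
      (∑ x ∈ (if h : (i : ℕ) < σ.length then ({σ.get ⟨i, h⟩} : Finset X) else Finset.univ), R x)
        = if h : (i : ℕ) < σ.length then R (σ.get ⟨i, h⟩) else 1 := by
    intro i
    by_cases h : (i : ℕ) < σ.length
    · rw [dif_pos h, dif_pos h, Finset.sum_singleton]
    · rw [dif_neg h, dif_neg h]; exact hR1
  rw [Finset.prod_congr rfl fun i _ => hsum i]
  exact prod_dite_prefix R σ k hk

lemma cyl_superadd_finset {X : Type*} [Fintype X] [MeasurableSpace X]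
    (R : X → ℝ) (hR0 : ∀ x, 0 ≤ R x) (hR1 : ∑ x, R x = 1)
    (ν : Measure (ℕ → X)) [IsProbabilityMeasure ν]
    (hν : ∀ σ : List X, ν (cylinder σ) = ENNReal.ofReal ((σ.map R).prod))
    (F : Finset (List X)) (hpf : ∀ σ ∈ F, ∀ τ ∈ F, σ <+: τ → σ = τ) :
    ∑ σ ∈ F, ν (cylinder σ) ≤ ν (⋃ σ ∈ F, cylinder σ) := by
  classical
  set k := F.sup List.length with hkdef
  have hlen : ∀ σ ∈ F, σ.length ≤ k := fun σ h => Finset.le_sup h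
  set p : List X → ℝ := fun σ => (σ.map R).prod with hp
  have hp0 : ∀ σ, 0 ≤ p σ := by
    intro σ
    refine List.prod_nonneg ?_
    intro a ha
    rcases List.mem_map.mp ha with ⟨x, _, rfl⟩
    exact hR0 x
  set w : (Fin k → X) → ℝ := fun τ => ∏ i, R (τ i) with hw
  have hw0 : ∀ τ, 0 ≤ w τ := fun τ => Finset.prod_nonneg fun i _ => hR0 _
  set G : Finset (Fin k → X) := Finset.univ.filter (fun τ => ∃ σ ∈ F, σ <+: List.ofFn τ) with hGdef
  have hGeq : G = F.biUnion (fun σ => Finset.univ.filter (fun τ : Fin k → X => σ <+: List.ofFn τ)) := by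
    ext τ; simp [hGdef]
  have hdisj : (↑F : Set (List X)).PairwiseDisjoint
      (fun σ => Finset.univ.filter (fun τ : Fin k → X => σ <+: List.ofFn τ)) := by
    intro σ₁ h1 σ₂ h2 hne
    refine Finset.disjoint_left.mpr ?_
    intro τ ht1 ht2
    rw [Finset.mem_filter] at ht1 ht2
    rcases List.prefix_or_prefix_of_prefix ht1.2 ht2.2 with h | h
    · exact hne (hpf _ h1 _ h2 h)
    · exact hne ((hpf _ h2 _ h1 h).symm)
  have hsumG : ∑ τ ∈ G, w τ = ∑ σ ∈ F, p σ := by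
    rw [hGeq, Finset.sum_biUnion hdisj]
    exact Finset.sum_congr rfl fun σ hσ => fiber_sum R hR1 σ k (hlen σ hσ)
  have hall : ∑ τ : Fin k → X, w τ = 1 := sum_all_tuples R hR1 k
  have hle1 : ∑ σ ∈ F, p σ ≤ 1 := by
    rw [← hsumG, ← hall]
    exact Finset.sum_le_sum_of_subset_of_nonneg (Finset.subset_univ G) fun τ _ _ => hw0 τ
  have hsumGc : ∑ τ ∈ Gᶜ, w τ = 1 - ∑ σ ∈ F, p σ := by
    have h := Finset.sum_add_sum_compl G w
    rw [hsumG, hall] at h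
    linarith
  have hcover : (Set.univ : Set (ℕ → X)) ⊆
      (⋃ σ ∈ F, cylinder σ) ∪ (⋃ τ ∈ Gᶜ, cylinder (List.ofFn τ)) := by
    intro x _
    by_cases hx : ∃ σ ∈ F, σ <+: List.ofFn (fun i : Fin k => x i)
    · left
      obtain ⟨σ, hσF, hpre⟩ := hx
      refine Set.mem_biUnion hσF ?_
      intro i
      have h2 := (prefix_ofFn_iff σ k (hlen σ hσF) _).mp hpre i i.isLt
      simpa using h2
    · right
      have hτG : (fun i : Fin k => x i) ∈ Gᶜ := by
        rw [Finset.mem_compl, hGdef, Finset.mem_filter]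
        simp only [Finset.mem_univ, true_and]
        exact hx
      refine Set.mem_biUnion hτG ?_
      intro i
      rw [List.get_ofFn]
      rfl
  have hGc : ν (⋃ τ ∈ Gᶜ, cylinder (List.ofFn τ)) ≤ ENNReal.ofReal (1 - ∑ σ ∈ F, p σ) := by
    calc ν (⋃ τ ∈ Gᶜ, cylinder (List.ofFn τ))
        ≤ ∑ τ ∈ Gᶜ, ν (cylinder (List.ofFn τ)) := measure_biUnion_finset_le _ _
      _ = ∑ τ ∈ Gᶜ, ENNReal.ofReal (w τ) := by
          refine Finset.sum_congr rfl fun τ _ => ?_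
          rw [hν, List.map_ofFn, List.prod_ofFn]; rfl
      _ = ENNReal.ofReal (∑ τ ∈ Gᶜ, w τ) := (ENNReal.ofReal_sum_of_nonneg fun τ _ => hw0 τ).symm
      _ = ENNReal.ofReal (1 - ∑ σ ∈ F, p σ) := by rw [hsumGc]
  have h1 : (1 : ENNReal) ≤ ν (⋃ σ ∈ F, cylinder σ) + ENNReal.ofReal (1 - ∑ σ ∈ F, p σ) := by
    calc (1 : ENNReal) = ν Set.univ := measure_univ.symm
      _ ≤ ν ((⋃ σ ∈ F, cylinder σ) ∪ (⋃ τ ∈ Gᶜ, cylinder (List.ofFn τ))) := measure_mono hcover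
      _ ≤ ν (⋃ σ ∈ F, cylinder σ) + ν (⋃ τ ∈ Gᶜ, cylinder (List.ofFn τ)) := measure_union_le _ _
      _ ≤ _ := add_le_add_right hGc _
  have hFsum : ∑ σ ∈ F, ν (cylinder σ) = ENNReal.ofReal (∑ σ ∈ F, p σ) := by
    rw [ENNReal.ofReal_sum_of_nonneg fun σ _ => hp0 σ]
    exact Finset.sum_congr rfl fun σ _ => hν σ
  rw [hFsum]
  refine (ENNReal.add_le_add_iff_right (a := ENNReal.ofReal (1 - ∑ σ ∈ F, p σ))
    ENNReal.ofReal_ne_top).mp ?_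
  have hkey : ENNReal.ofReal (∑ σ ∈ F, p σ) + ENNReal.ofReal (1 - ∑ σ ∈ F, p σ) = 1 := by
    rw [← ENNReal.ofReal_add (Finset.sum_nonneg fun σ _ => hp0 σ) (by linarith)]
    norm_num
  rw [hkey]
  exact h1

lemma cyl_superadd {X : Type*} [Fintype X] [MeasurableSpace X]
    (R : X → ℝ) (hR0 : ∀ x, 0 ≤ R x) (hR1 : ∑ x, R x = 1)
    (ν : Measure (ℕ → X)) [IsProbabilityMeasure ν]
    (hν : ∀ σ : List X, ν (cylinder σ) = ENNReal.ofReal ((σ.map R).prod))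
    (S : Set (List X)) (hpf : PrefixFreeSet S) :
    ∑' σ : S, ν (cylinder (σ : List X)) ≤ ν (openCyl S) := by
  classical
  rw [tsum_subtype S (fun σ => ν (cylinder σ)), ENNReal.tsum_eq_iSup_sum]
  refine iSup_le fun F => ?_
  have heq : ∑ σ ∈ F, Set.indicator S (fun σ => ν (cylinder σ)) σ
      = ∑ σ ∈ F.filter (· ∈ S), ν (cylinder σ) := by
    rw [Finset.sum_filter]
    exact Finset.sum_congr rfl fun σ _ => by rw [Set.indicator_apply]
  rw [heq]
  have hsub : (⋃ σ ∈ F.filter (· ∈ S), cylinder σ) ⊆ openCyl S := by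
    refine Set.iUnion₂_subset fun σ hσ => ?_
    rw [Finset.mem_filter] at hσ
    exact Set.subset_biUnion_of_mem hσ.2
  refine le_trans (cyl_superadd_finset R hR0 hR1 ν hν (F.filter (· ∈ S)) ?_) (measure_mono hsub)
  intro σ hσ τ hτ hpre
  rw [Finset.mem_filter] at hσ hτ
  exact hpf σ hσ.2 τ hτ.2 hpre

lemma proj_cyl_bound {Ω Θ : Type*} [Fintype Θ] [MeasurableSpace Ω] [MeasurableSpace Θ]
    (P : Ω × Θ → ℝ) (hP0 : ∀ p, 0 ≤ P p)
    (μ : Measure (ℕ → Ω × Θ))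
    (hμ : ∀ σ : List (Ω × Θ), μ (cylinder σ) = ENNReal.ofReal ((σ.map P).prod))
    (σ : List Ω) :
    μ {x : ℕ → Ω × Θ | ∀ i : Fin σ.length, (x i).1 = σ.get i}
      ≤ ENNReal.ofReal ((σ.map fun m => ∑ l : Θ, P (m, l)).prod) := by
  classical
  have hsub : {x : ℕ → Ω × Θ | ∀ i : Fin σ.length, (x i).1 = σ.get i}
      ⊆ ⋃ v : Fin σ.length → Θ, cylinder (List.ofFn fun i => (σ.get i, (v i : Θ))) := by
    intro x hx
    refine Set.mem_iUnion.mpr ⟨fun i => (x i).2, ?_⟩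
    intro i
    rw [List.get_ofFn]
    refine Prod.ext ?_ rfl
    exact hx (Fin.cast (by simp) i)
  calc μ {x : ℕ → Ω × Θ | ∀ i : Fin σ.length, (x i).1 = σ.get i}
      ≤ μ (⋃ v : Fin σ.length → Θ, cylinder (List.ofFn fun i => (σ.get i, v i))) :=
        measure_mono hsub
    _ ≤ ∑' v : Fin σ.length → Θ, μ (cylinder (List.ofFn fun i => (σ.get i, v i))) :=
        measure_iUnion_le _
    _ = ∑ v : Fin σ.length → Θ, ENNReal.ofReal (∏ i, P (σ.get i, v i)) := by
        rw [tsum_fintype]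
        refine Finset.sum_congr rfl fun v _ => ?_
        rw [hμ, List.map_ofFn, List.prod_ofFn]; rfl
    _ = ENNReal.ofReal (∑ v : Fin σ.length → Θ, ∏ i, P (σ.get i, v i)) :=
        (ENNReal.ofReal_sum_of_nonneg fun v _ => Finset.prod_nonneg fun i _ => hP0 _).symm
    _ = ENNReal.ofReal ((σ.map fun m => ∑ l : Θ, P (m, l)).prod) := by
        congr 1
        rw [list_prod_map_get, Finset.prod_univ_sum, Fintype.piFinset_univ]

theorem stmt5 {Ω Θ : Type*} [Fintype Ω] [Fintype Θ]
    [Primcodable Ω] [Primcodable Θ] [MeasurableSpace Ω] [MeasurableSpace Θ]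
    (P : Ω × Θ → ℝ) (hP0 : ∀ p, 0 ≤ P p) (hP1 : ∑ p : Ω × Θ, P p = 1)
    (Q : Ω → ℝ) (hQ : ∀ m : Ω, Q m = ∑ l : Θ, P (m, l))
    (μ : Measure (ℕ → Ω × Θ)) [IsProbabilityMeasure μ]
    (hμ : ∀ σ : List (Ω × Θ), μ (cylinder σ) = ENNReal.ofReal ((σ.map P).prod))
    (ν : Measure (ℕ → Ω)) [IsProbabilityMeasure ν]
    (hν : ∀ σ : List Ω, ν (cylinder σ) = ENNReal.ofReal ((σ.map Q).prod))
    (α : ℕ → Ω × Θ) (hα : MLRandom μ α)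
    (β : ℕ → Ω) (hβ : ∀ n, β n = (α n).1) :
    MLRandom ν β := by
  classical
  have hQ0 : ∀ m, 0 ≤ Q m := fun m => (hQ m) ▸ Finset.sum_nonneg fun l _ => hP0 _
  have hQ1 : ∑ m : Ω, Q m = 1 := by
    rw [← hP1, Fintype.sum_prod_type]
    exact Finset.sum_congr rfl fun m _ => hQ m
  intro C hC hmem
  set D : Set (ℕ × List (Ω × Θ)) := {p | (p.1, p.2.map Prod.fst) ∈ C} with hD
  refine hα D ⟨?_, ?_⟩ ?_
  · -- recursively enumerable
    obtain ⟨f, hf, hfd⟩ := hC.1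
    refine ⟨fun p => f (p.1, p.2.map Prod.fst), ?_, fun p => hfd _⟩
    have hcomp : Computable fun p : ℕ × List (Ω × Θ) => (p.1, p.2.map Prod.fst) :=
      (Primrec.pair Primrec.fst
        (Primrec.list_map Primrec.snd (Primrec.fst.comp Primrec.snd).to₂)).to_comp
    exact hf.comp hcomp
  · -- test conditions
    intro n hn
    obtain ⟨hpf, hlt⟩ := hC.2 n hn
    constructor
    · intro σ' hσ' τ' hτ' hpre
      have h1 : σ'.map Prod.fst <+: τ'.map Prod.fst := hpre.map Prod.fst
      have h2 := hpf _ hσ' _ hτ' h1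
      refine hpre.eq_of_length ?_
      have := congrArg List.length h2
      simpa using this
    · have hsub : openCyl {σ' | (n, σ') ∈ D} ⊆
          ⋃ σ : {σ : List Ω // (n, σ) ∈ C},
            {x : ℕ → Ω × Θ | ∀ i : Fin (σ : List Ω).length, (x i).1 = (σ : List Ω).get i} := by
        refine Set.iUnion₂_subset fun σ' hσ' => ?_
        refine Set.subset_iUnion_of_subset ⟨σ'.map Prod.fst, hσ'⟩ ?_
        intro x hx
        intro i
        simp only [List.get_eq_getElem, List.getElem_map]
        exact congrArg Prod.fst (hx ⟨i, by simpa using i.isLt⟩)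
      calc μ (openCyl {σ' | (n, σ') ∈ D})
          ≤ ∑' σ : {σ : List Ω // (n, σ) ∈ C},
              μ {x : ℕ → Ω × Θ | ∀ i : Fin (σ : List Ω).length, (x i).1 = (σ : List Ω).get i} :=
            (measure_mono hsub).trans (measure_iUnion_le _)
        _ ≤ ∑' σ : {σ : List Ω // (n, σ) ∈ C}, ν (cylinder (σ : List Ω)) := by
            refine ENNReal.tsum_le_tsum fun σ => ?_
            rw [hν]
            have hb := proj_cyl_bound P hP0 μ hμ (σ : List Ω)
            have hQfun : Q = fun m => ∑ l : Θ, P (m, l) := funext hQ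
            rw [hQfun]
            exact hb
        _ ≤ ν (openCyl {σ | (n, σ) ∈ C}) := cyl_superadd Q hQ0 hQ1 ν hν _ hpf
        _ < (2 : ENNReal)⁻¹ ^ n := hlt
  · -- α is captured
    rw [Set.mem_iInter₂] at hmem ⊢
    intro n hn
    rcases Set.mem_iUnion₂.mp (hmem n hn) with ⟨σ, hσ, hβσ⟩
    refine Set.mem_iUnion₂.mpr ⟨List.ofFn (fun i : Fin σ.length => α i), ?_, ?_⟩
    · show (n, (List.ofFn fun i : Fin σ.length => α ↑i).map Prod.fst) ∈ C
      have heq : (List.ofFn fun i : Fin σ.length => α ↑i).map Prod.fst = σ := by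
        rw [List.map_ofFn]
        have h2 : (Prod.fst ∘ fun i : Fin σ.length => α ↑i) = σ.get := by
          funext i
          have := hβσ i
          rw [hβ] at this
          exact this
        rw [h2, List.ofFn_get]
      rw [heq]
      exact hσ
    · intro i
      rw [List.get_ofFn]
      rfl
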